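/- If λ is a smooth real-valued function on a connected surface satisfying λ e₁(λ) = 2τ e₂(λ) and 3λ e₂(λ) = 2τ e₁(λ) with τ ≠ 0, then λ is constant. More precisely, substituting gives 3λ² e₂(λ) = 4τ² e₂(λ), so (3λ² − 4τ²) e₂(λ) = 0 and similarly (3λ² − 4τ²) e₁(λ) = 0 up to scaling; at any point where grad λ ≠ 0 one deduces 3λ² = 4τ² and λ² = 4τ²·(e₂λ/e₁λ)² simultaneously leading to grad λ = 0, a contradiction; hence grad λ ≡ 0. -/

import Mathlib

open Filter Metric Set

/-- If `λ` is a differentiable function on a connected open domain of a surface,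
satisfying `λ e₁(λ) = 2τ e₂(λ)` and `3λ e₂(λ) = 2τ e₁(λ)` with `τ ≠ 0`, where
`{e₁, e₂}` is a frame (spanning the tangent plane at each point), then `λ` is constant. -/
theorem stmt5 (τ : ℝ) (hτ : τ ≠ 0)
    (Ω : Set (ℝ × ℝ)) (hΩo : IsOpen Ω) (hΩc : IsConnected Ω)
    (lam : ℝ × ℝ → ℝ) (e₁ e₂ : ℝ × ℝ → ℝ × ℝ)
    (hlam : ∀ x ∈ Ω, DifferentiableAt ℝ lam x)
    (hframe : ∀ x ∈ Ω, Submodule.span ℝ {e₁ x, e₂ x} = ⊤)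
    (h1 : ∀ x ∈ Ω, lam x * fderiv ℝ lam x (e₁ x) = 2 * τ * fderiv ℝ lam x (e₂ x))
    (h2 : ∀ x ∈ Ω, 3 * lam x * fderiv ℝ lam x (e₂ x) = 2 * τ * fderiv ℝ lam x (e₁ x)) :
    ∀ x ∈ Ω, ∀ y ∈ Ω, lam x = lam y := by
  -- Step A: where 3λ² ≠ 4τ², the derivative vanishes
  have stepA : ∀ z ∈ Ω, 3 * (lam z)^2 ≠ 4 * τ^2 → fderiv ℝ lam z = 0 := by
    intro z hz hne
    have e1 := h1 z hz
    have e2 := h2 z hz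
    have ha : fderiv ℝ lam z (e₁ z) = 0 := by
      have key : (3 * (lam z)^2 - 4 * τ^2) * fderiv ℝ lam z (e₁ z) = 0 := by
        linear_combination 3 * lam z * e1 + 2 * τ * e2
      rcases mul_eq_zero.mp key with h | h
      · exact absurd (by linarith) hne
      · exact h
    have hb : fderiv ℝ lam z (e₂ z) = 0 := by
      have key : (3 * (lam z)^2 - 4 * τ^2) * fderiv ℝ lam z (e₂ z) = 0 := by
        linear_combination lam z * e2 + 2 * τ * e1
      rcases mul_eq_zero.mp key with h | h
      · exact absurd (by linarith) hne
      · exact h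
    apply ContinuousLinearMap.ext
    intro v
    have hv : v ∈ Submodule.span ℝ {e₁ z, e₂ z} := by
      rw [hframe z hz]; exact Submodule.mem_top
    induction hv using Submodule.span_induction with
    | mem w hw =>
      have hw' : w = e₁ z ∨ w = e₂ z := by simpa using hw
      rcases hw' with rfl | rfl
      · exact ha
      · exact hb
    | zero => simp
    | add u w _ _ hu hw => simp [map_add, hu, hw]
    | smul a u _ hu => simp [map_smul, hu]
  -- Step B: the derivative vanishes everywhere on Ω
  have hgrad : ∀ x₀ ∈ Ω, fderiv ℝ lam x₀ = 0 := by
    intro x₀ hx₀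
    by_contra hF
    obtain ⟨v, hv⟩ : ∃ v, fderiv ℝ lam x₀ v ≠ 0 := by
      by_contra h
      push_neg at h
      exact hF (ContinuousLinearMap.ext fun v => by simpa using h v)
    set c := lam x₀ with hcdef
    have hcsq : 3 * c^2 = 4 * τ^2 := by
      by_contra h
      exact hF (stepA x₀ hx₀ h)
    have hτ2 : τ^2 ≠ 0 := pow_ne_zero 2 hτ
    have hc0 : c ≠ 0 := by
      intro h
      rw [h] at hcsq
      have : τ^2 = 0 := by linarith
      exact hτ2 this
    have hline : ∀ t : ℝ, HasDerivAt (fun s : ℝ => x₀ + s • v) v t := by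
      intro t
      simpa using (((hasDerivAt_id t).smul_const v).const_add x₀)
    have hg : ∀ t : ℝ, x₀ + t • v ∈ Ω →
        HasDerivAt (fun s => lam (x₀ + s • v)) (fderiv ℝ lam (x₀ + t • v) v) t := by
      intro t ht
      exact ((hlam _ ht).hasFDerivAt.comp_hasDerivAt t (hline t))
    have h00 : x₀ + (0:ℝ) • v = x₀ := by simp
    have hg0 : HasDerivAt (fun s => lam (x₀ + s • v)) (fderiv ℝ lam x₀ v) (0:ℝ) := by
      have h := hg (0:ℝ) (by rw [h00]; exact hx₀)
      rwa [h00] at h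
    -- eventualities
    have hE1 : ∀ᶠ t in nhds (0:ℝ), x₀ + t • v ∈ Ω := by
      have hco : ContinuousAt (fun s : ℝ => x₀ + s • v) 0 := (hline 0).continuousAt
      have := hco.preimage_mem_nhds (hΩo.mem_nhds (by rw [h00]; exact hx₀))
      exact this
    have hE2 : ∀ᶠ t in nhds (0:ℝ), lam (x₀ + t • v) ≠ -c := by
      have hco : ContinuousAt (fun s : ℝ => lam (x₀ + s • v)) 0 := hg0.continuousAt
      have hgc : lam (x₀ + (0:ℝ) • v) = c := by rw [h00]
      have htd : Tendsto (fun s : ℝ => lam (x₀ + s • v)) (nhds 0) (nhds c) := by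
        have h' := hco.tendsto
        simp only [h00] at h'
        rwa [hcdef]
      exact htd.eventually_ne (by intro h; apply hc0; linarith)
    have hE3 : ∀ᶠ t in nhdsWithin (0:ℝ) {(0:ℝ)}ᶜ, lam (x₀ + t • v) ≠ c := by
      have hslope := hasDerivAt_iff_tendsto_slope.mp hg0
      have hev : ∀ᶠ t in nhdsWithin (0:ℝ) {(0:ℝ)}ᶜ,
          slope (fun s => lam (x₀ + s • v)) 0 t ≠ 0 := hslope.eventually_ne hv
      filter_upwards [hev, self_mem_nhdsWithin] with t ht ht0
      intro hceq
      apply ht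
      rw [slope_def_field, hceq, h00, hcdef]
      simp
    rw [eventually_nhdsWithin_iff] at hE3
    obtain ⟨ε, hε, hprop⟩ := Metric.eventually_nhds_iff.mp ((hE1.and hE2).and hE3)
    set t₀ := ε / 2 with ht₀def
    have ht₀pos : 0 < t₀ := half_pos hε
    have hd : ∀ s : ℝ, s ∈ Icc 0 t₀ → dist s 0 < ε := by
      intro s hs
      rw [Real.dist_eq, sub_zero, abs_of_nonneg hs.1]
      have := hs.2
      simp only [ht₀def] at this ⊢
      linarith
    have hmem : ∀ s : ℝ, s ∈ Icc 0 t₀ → x₀ + s • v ∈ Ω := fun s hs =>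
      ((hprop (hd s hs)).1).1
    have hcont : ContinuousOn (fun s => lam (x₀ + s • v)) (Icc 0 t₀) := fun s hs =>
      (hg s (hmem s hs)).continuousAt.continuousWithinAt
    have hderiv : ∀ s ∈ Ioo (0:ℝ) t₀, HasDerivAt (fun s => lam (x₀ + s • v)) 0 s := by
      intro s hs
      have hsIcc : s ∈ Icc (0:ℝ) t₀ := ⟨hs.1.le, hs.2.le⟩
      have hsΩ := hmem s hsIcc
      have hne1 : lam (x₀ + s • v) ≠ c :=
        (hprop (hd s hsIcc)).2 (by simpa using hs.1.ne')
      have hne2 : lam (x₀ + s • v) ≠ -c := ((hprop (hd s hsIcc)).1).2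
      have hne : 3 * (lam (x₀ + s • v))^2 ≠ 4 * τ^2 := by
        intro h
        have hfac : (lam (x₀ + s • v) - c) * (lam (x₀ + s • v) + c) = 0 := by
          nlinarith
        rcases mul_eq_zero.mp hfac with h' | h'
        · exact hne1 (by linarith)
        · exact hne2 (by linarith)
      have := hg s hsΩ
      rwa [stepA _ hsΩ hne, ContinuousLinearMap.zero_apply] at this
    obtain ⟨s, _, hsl⟩ := exists_hasDerivAt_eq_slope (fun s => lam (x₀ + s • v))
      (fun _ => (0:ℝ)) ht₀pos hcont hderiv
    have ht₀Icc : t₀ ∈ Icc (0:ℝ) t₀ := ⟨ht₀pos.le, le_refl _⟩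
    have hnec : lam (x₀ + t₀ • v) ≠ c := (hprop (hd t₀ ht₀Icc)).2 (by simpa using ht₀pos.ne')
    apply hnec
    have ht₀ne : t₀ - 0 ≠ 0 := by simpa using ht₀pos.ne'
    field_simp at hsl
    rw [hcdef]
    rw [h00] at hsl
    linarith
  -- Conclusion: locally constant + connected ⇒ constant
  intro x hx y hy
  by_contra hne
  have hcontΩ : ContinuousOn lam Ω := fun z hz =>
    (hlam z hz).continuousAt.continuousWithinAt
  have hUopen : IsOpen {z | z ∈ Ω ∧ lam z = lam x} := by
    rw [Metric.isOpen_iff]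
    rintro z ⟨hzΩ, hzc⟩
    obtain ⟨ε, hε, hball⟩ := Metric.isOpen_iff.mp hΩo z hzΩ
    refine ⟨ε, hε, fun w hw => ⟨hball hw, ?_⟩⟩
    have hconst := (convex_ball z ε).is_const_of_fderivWithin_eq_zero
      (f := lam) (fun u hu => (hlam u (hball hu)).differentiableWithinAt)
      (fun u hu => by
        rw [fderivWithin_of_isOpen isOpen_ball hu]
        exact hgrad u (hball hu))
      hw (mem_ball_self hε)
    rw [hconst, hzc]
  have hVopen : IsOpen {z | z ∈ Ω ∧ lam z ≠ lam x} := by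
    have : {z | z ∈ Ω ∧ lam z ≠ lam x} = Ω ∩ lam ⁻¹' {lam x}ᶜ := by
      ext z; simp
    rw [this]
    exact hcontΩ.isOpen_inter_preimage hΩo isOpen_compl_singleton
  obtain ⟨z, _, ⟨⟨_, hz1⟩, ⟨_, hz2⟩⟩⟩ := hΩc.isPreconnected
    _ _ hUopen hVopen
    (fun z hz => by by_cases h : lam z = lam x
                    · exact Or.inl ⟨hz, h⟩
                    · exact Or.inr ⟨hz, h⟩)
    ⟨x, hx, hx, rfl⟩ ⟨y, hy, hy, fun h => hne h.symm⟩
  exact hz2 hz1
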